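/- arXiv:1705.00879 — 2 statements merged into one kernel-verified Lean document; each statement's English description precedes it below -/
import Mathlib

section
/- Let M ∈ ℤ^{d×d} be regular and m := |det M|. The translates {T(y)(m^{−1/2} D_M) : y ∈ P(M)} of the normalized Dirichlet kernel m^{−1/2} D_M are orthonormal in L²(T^d). -/
open MeasureTheory Complex Matrix
open scoped BigOperators Classical

noncomputable section

namespace ElastFFT

variable (d : ℕ)

/-- Real action of an integer matrix on a real vector. -/
def mulVecR (M : Matrix (Fin d) (Fin d) ℤ) (y : Fin d → ℝ) : Fin d → ℝ :=
  (M.map (Int.cast : ℤ → ℝ)).mulVec y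

/-- The lattice Λ(M) = M⁻¹ ℤ^d. -/
def lattice (M : Matrix (Fin d) (Fin d) ℤ) : Set (Fin d → ℝ) :=
  {y | ∃ z : Fin d → ℤ, mulVecR d M y = fun i => (z i : ℝ)}

/-- The pattern P(M) = Λ(M) ∩ [-1/2, 1/2)^d. -/
def pattern (M : Matrix (Fin d) (Fin d) ℤ) : Set (Fin d → ℝ) :=
  {y | y ∈ lattice d M ∧ ∀ i, y i ∈ Set.Ico (-(1/2) : ℝ) (1/2)}

/-- The generating set G(N) = ℤ^d ∩ N·[-1/2,1/2)^d. -/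
def genSet (N : Matrix (Fin d) (Fin d) ℤ) : Set (Fin d → ℤ) :=
  {h | ∃ y : Fin d → ℝ, (∀ i, y i ∈ Set.Ico (-(1/2) : ℝ) (1/2)) ∧
        (fun i => (h i : ℝ)) = mulVecR d N y}

/-- The fundamental cell [-π, π)^d of the torus. -/
def cube : Set (Fin d → ℝ) := Set.univ.pi fun _ => Set.Ico (-Real.pi) Real.pi

/-- Pairing of an integer frequency and a real point. -/
def dot (k : Fin d → ℤ) (x : Fin d → ℝ) : ℝ := ∑ i, (k i : ℝ) * x i

/-- A function on the torus: 2π-periodic in each coordinate. -/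
def TorusFun (f : (Fin d → ℝ) → ℂ) : Prop :=
  ∀ (x : Fin d → ℝ) (z : Fin d → ℤ), f (x + fun i => 2 * Real.pi * (z i : ℝ)) = f x

/-- The L²(𝕋^d) inner product (normalised). -/
def torusInner (f g : (Fin d → ℝ) → ℂ) : ℂ :=
  (((2 * Real.pi) ^ d : ℝ) : ℂ)⁻¹ * ∫ x in cube d, f x * (starRingEnd ℂ) (g x)

/-- Fourier coefficient c_k(f). -/
def fCoeff (f : (Fin d → ℝ) → ℂ) (k : Fin d → ℤ) : ℂ :=
  torusInner d f fun x => Complex.exp (Complex.I * (dot d k x : ℝ))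

/-- Membership in the Wiener algebra A(𝕋^d). -/
def InWiener (f : (Fin d → ℝ) → ℂ) : Prop :=
  Summable (fun k : Fin d → ℤ => ‖fCoeff d f k‖) ∧
    ∀ x, HasSum (fun k : Fin d → ℤ =>
      fCoeff d f k * Complex.exp (Complex.I * (dot d k x : ℝ))) (f x)

/-- The translate T(y)f = f(· - 2πy). -/
def Tr (y : Fin d → ℝ) (f : (Fin d → ℝ) → ℂ) : (Fin d → ℝ) → ℂ :=
  fun x => f (x - (2 * Real.pi) • y)

/-- The space of translates V_M^f, as a set of L² functions (a.e. equality on the cube). -/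
def spanTranslates (M : Matrix (Fin d) (Fin d) ℤ) (f : (Fin d → ℝ) → ℂ) :
    Set ((Fin d → ℝ) → ℂ) :=
  {g | ∃ a : (Fin d → ℝ) → ℂ,
      g =ᵐ[volume.restrict (cube d)] fun x => ∑ᶠ y ∈ pattern d M, a y * Tr d y f x}

/-- Orthonormality of the translates of f on the pattern. -/
def OrthonormalTranslates (M : Matrix (Fin d) (Fin d) ℤ) (f : (Fin d → ℝ) → ℂ) : Prop :=
  ∀ y ∈ pattern d M, ∀ y' ∈ pattern d M,
    torusInner d (Tr d y f) (Tr d y' f) = if y = y' then 1 else 0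

/-- A fundamental interpolant of V_M^f. -/
def IsFundamentalInterpolant (M : Matrix (Fin d) (Fin d) ℤ) (f Λ : (Fin d → ℝ) → ℂ) : Prop :=
  Λ ∈ spanTranslates d M f ∧
    ∀ y ∈ pattern d M,
      Λ ((2 * Real.pi) • y) = if ∃ z : Fin d → ℤ, y = fun i => (z i : ℝ) then 1 else 0

/-- Frobenius inner product of complex matrices. -/
def frobInner (A B : Matrix (Fin d) (Fin d) ℂ) : ℂ :=
  ∑ i, ∑ j, A i j * (starRingEnd ℂ) (B i j)

/-- Application of a fourth-order (real) tensor to a complex matrix. -/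
def capply (C : Fin d → Fin d → Fin d → Fin d → ℝ) (γ : Matrix (Fin d) (Fin d) ℂ) :
    Matrix (Fin d) (Fin d) ℂ :=
  Matrix.of fun i j => ∑ a, ∑ b, (C i j a b : ℂ) * γ a b

/-- The usual symmetries of a stiffness tensor. -/
def TensorSymm (C : Fin d → Fin d → Fin d → Fin d → ℝ) : Prop :=
  ∀ i j k l, C i j k l = C j i k l ∧ C i j k l = C i j l k ∧ C i j k l = C k l i j

/-- Positive definiteness of a reference stiffness on symmetric matrices. -/
def TensorPosDef (C : Fin d → Fin d → Fin d → Fin d → ℝ) : Prop :=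
  ∃ c : ℝ, 0 < c ∧ ∀ γ : Matrix (Fin d) (Fin d) ℂ, γ.IsSymm →
    c * ∑ i, ∑ j, Complex.normSq (γ i j) ≤ (frobInner d (capply d C γ) γ).re

/-- The symmetrised gradient D_k u = (i/2)(k uᵀ + u kᵀ). -/
def symGrad (k : Fin d → ℝ) (u : Fin d → ℂ) : Matrix (Fin d) (Fin d) ℂ :=
  Matrix.of fun i j => (Complex.I / 2) * ((k i : ℂ) * u j + u i * (k j : ℂ))

/-- The adjoint D_k* of the symmetrised gradient (w.r.t. Frobenius inner product). -/
def symGradAdj (k : Fin d → ℝ) (A : Matrix (Fin d) (Fin d) ℂ) : Fin d → ℂ :=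
  fun j => ∑ i, (-Complex.I / 2) * (k i : ℂ) * (A i j + A j i)

/-- The acoustic tensor A(k) = D_k* ∘ C⁰ ∘ D_k as a d×d complex matrix. -/
def acoustic (C0 : Fin d → Fin d → Fin d → Fin d → ℝ) (k : Fin d → ℝ) :
    Matrix (Fin d) (Fin d) ℂ :=
  Matrix.of fun i j => symGradAdj d k (capply d C0 (symGrad d k (Pi.single j 1))) i

/-- The Green operator symbol Γ̂⁰_k = D_k ∘ A(k)⁻¹ ∘ D_k* for real k ≠ 0. -/
def greenSymR (C0 : Fin d → Fin d → Fin d → Fin d → ℝ) (k : Fin d → ℝ)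
    (E : Matrix (Fin d) (Fin d) ℂ) : Matrix (Fin d) (Fin d) ℂ :=
  symGrad d k ((acoustic d C0 k)⁻¹.mulVec (symGradAdj d k E))

/-- The Green operator symbol for integer frequencies, Γ̂⁰_0 := 0. -/
def greenSymZ (C0 : Fin d → Fin d → Fin d → Fin d → ℝ) (k : Fin d → ℤ)
    (E : Matrix (Fin d) (Fin d) ℂ) : Matrix (Fin d) (Fin d) ℂ :=
  if k = 0 then 0 else greenSymR d C0 (fun i => (k i : ℝ)) E

/-- Entrywise Fourier coefficient of a matrix field. -/
def mFourier (ε : (Fin d → ℝ) → Matrix (Fin d) (Fin d) ℂ) (k : Fin d → ℤ) :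
    Matrix (Fin d) (Fin d) ℂ :=
  Matrix.of fun i j => fCoeff d (fun x => ε x i j) k

/-- The periodised Green symbol Γ̂^p_h = m Σ_z Γ̂⁰_{h+Mᵀz} |c_{h+Mᵀz}(f)|². -/
def gammaPSym (M : Matrix (Fin d) (Fin d) ℤ) (C0 : Fin d → Fin d → Fin d → Fin d → ℝ)
    (f : (Fin d → ℝ) → ℂ) (h : Fin d → ℤ) (E : Matrix (Fin d) (Fin d) ℂ) :
    Matrix (Fin d) (Fin d) ℂ :=
  (M.det.natAbs : ℂ) • ∑' z : Fin d → ℤ,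
    ((Complex.normSq (fCoeff d f (h + Matrix.mulVec Mᵀ z)) : ℝ) : ℂ) •
      greenSymZ d C0 (h + Matrix.mulVec Mᵀ z) E

/-- The periodised Green operator applied to a coefficient field: DFT, multiply, inverse DFT. -/
def gammaP (M : Matrix (Fin d) (Fin d) ℤ) (C0 : Fin d → Fin d → Fin d → Fin d → ℝ)
    (f : (Fin d → ℝ) → ℂ) (V : (Fin d → ℝ) → Matrix (Fin d) (Fin d) ℂ)
    (x : Fin d → ℝ) : Matrix (Fin d) (Fin d) ℂ :=
  ((M.det.natAbs : ℂ))⁻¹ • ∑ᶠ h ∈ genSet d Mᵀ,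
    Complex.exp (2 * Real.pi * Complex.I * (dot d h x : ℝ)) •
      gammaPSym d M C0 f h
        (∑ᶠ y ∈ pattern d M, Complex.exp (-(2 * Real.pi * Complex.I) * (dot d h y : ℝ)) • V y)

/-- The Dirichlet kernel D_M. -/
def dirichlet (M : Matrix (Fin d) (Fin d) ℤ) : (Fin d → ℝ) → ℂ :=
  fun x => ∑ᶠ h ∈ genSet d Mᵀ, Complex.exp (Complex.I * (dot d h x : ℝ))


/-! ### Auxiliary lemmas -/

section Aux

variable {d : ℕ}

/-- cast of an integer vector to a real vector -/
private def cV (z : Fin d → ℤ) : Fin d → ℝ := fun i => (z i : ℝ)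

lemma dot_sub_left (k k' : Fin d → ℤ) (x : Fin d → ℝ) :
    dot d (k - k') x = dot d k x - dot d k' x := by
  simp [dot, sub_mul, Finset.sum_sub_distrib]

lemma dot_sub_right (k : Fin d → ℤ) (x w : Fin d → ℝ) :
    dot d k (x - w) = dot d k x - dot d k w := by
  simp [dot, mul_sub, Finset.sum_sub_distrib]

lemma dot_smul_right (k : Fin d → ℤ) (c : ℝ) (x : Fin d → ℝ) :
    dot d k (c • x) = c * dot d k x := by
  simp [dot, Finset.mul_sum]; exact Finset.sum_congr rfl fun i _ => by ring

lemma dot_add_left (k k' : Fin d → ℤ) (x : Fin d → ℝ) :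
    dot d (k + k') x = dot d k x + dot d k' x := by
  simp [dot, add_mul, Finset.sum_add_distrib]

lemma dot_single (i : Fin d) (x : Fin d → ℝ) :
    dot d (Pi.single i 1) x = x i := by
  simp only [dot, Pi.single_apply]
  rw [Finset.sum_eq_single i] <;> simp +contextual

lemma dot_mulVec_transpose (M : Matrix (Fin d) (Fin d) ℤ) (z : Fin d → ℤ) (v : Fin d → ℝ) :
    dot d (Mᵀ.mulVec z) v = ∑ j, (z j : ℝ) * (mulVecR d M v) j := by
  simp only [dot, Matrix.mulVec, dotProduct, Matrix.transpose_apply, mulVecR,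
    Matrix.map_apply]
  push_cast
  simp_rw [Finset.sum_mul, Finset.mul_sum]
  rw [Finset.sum_comm]
  exact Finset.sum_congr rfl fun j _ => Finset.sum_congr rfl fun i _ => by ring

lemma cV_mulVec (M : Matrix (Fin d) (Fin d) ℤ) (z : Fin d → ℤ) :
    cV (M.mulVec z) = (M.map (Int.cast : ℤ → ℝ)).mulVec (cV z) := by
  funext i
  simp [cV, Matrix.mulVec, dotProduct]

lemma mem_genSet_iff (N : Matrix (Fin d) (Fin d) ℤ) (h : Fin d → ℤ) :
    h ∈ genSet d N ↔ ∃ y : Fin d → ℝ, (∀ i, y i ∈ Set.Ico (-(1/2) : ℝ) (1/2)) ∧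
      cV h = (N.map (Int.cast : ℤ → ℝ)).mulVec y := Iff.rfl

end Aux

section Red

variable {d : ℕ} {M : Matrix (Fin d) (Fin d) ℤ}

private lemma detR_ne_zero (hM : M.det ≠ 0) :
    ((Mᵀ).map (Int.cast : ℤ → ℝ)).det ≠ 0 := by
  have : (Mᵀ.map (Int.cast : ℤ → ℝ)).det = ((Mᵀ.det : ℤ) : ℝ) :=
    (RingHom.map_det (Int.castRingHom ℝ) Mᵀ).symm
  rw [this, Matrix.det_transpose]
  exact_mod_cast hM

private lemma mulVecR_injective (hM : M.det ≠ 0) :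
    Function.Injective ((Mᵀ).map (Int.cast : ℤ → ℝ)).mulVec := by
  rw [Matrix.mulVec_injective_iff_isUnit, Matrix.isUnit_iff_isUnit_det]
  exact (detR_ne_zero hM).isUnit

/-- uniqueness: two elements of the generating set in the same coset mod `Mᵀ ℤ^d` coincide -/
lemma genSet_unique (hM : M.det ≠ 0) {g g' : Fin d → ℤ}
    (hg : g ∈ genSet d Mᵀ) (hg' : g' ∈ genSet d Mᵀ) {z : Fin d → ℤ}
    (hz : g = g' + Mᵀ.mulVec z) : g = g' := by
  obtain ⟨y, hy, hyeq⟩ := hg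
  obtain ⟨y', hy', hyeq'⟩ := hg'
  set B := (Mᵀ).map (Int.cast : ℤ → ℝ) with hB
  have hcast : cV g = cV g' + B.mulVec (cV z) := by
    rw [hz, ← cV_mulVec]; funext i; simp [cV]
  have h1 : B.mulVec y = B.mulVec (y' + cV z) := by
    rw [Matrix.mulVec_add]
    have e1 : cV g = B.mulVec y := hyeq
    have e2 : cV g' = B.mulVec y' := hyeq'
    rw [e1, e2] at hcast
    exact hcast
  have h2 : y = y' + cV z := mulVecR_injective hM h1
  have hz0 : z = 0 := by
    funext i
    have h3 : y i - y' i = (z i : ℝ) := by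
      have := congrFun h2 i; simp [cV] at this; linarith
    have b1 := hy i; have b2 := hy' i
    simp only [Set.mem_Ico] at b1 b2
    have : -1 < (z i : ℝ) ∧ (z i : ℝ) < 1 := by constructor <;> [linarith; linarith]
    have h4 : -1 < z i := by exact_mod_cast this.1
    have h5 : z i < 1 := by exact_mod_cast this.2
    show z i = (0 : Fin d → ℤ) i
    simp only [Pi.zero_apply]
    omega
  rw [hz0] at hz; simpa using hz

/-- existence: every integer vector reduces into the generating set -/
lemma genSet_exists_red (hM : M.det ≠ 0) (h : Fin d → ℤ) :
    ∃ g ∈ genSet d Mᵀ, ∃ z : Fin d → ℤ, h = g + Mᵀ.mulVec z := by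
  set B := (Mᵀ).map (Int.cast : ℤ → ℝ) with hB
  have hBdet : IsUnit B.det := (detR_ne_zero hM).isUnit
  set w : Fin d → ℝ := B⁻¹.mulVec (cV h) with hw
  set z : Fin d → ℤ := fun i => ⌊w i + 1/2⌋ with hzdef
  set y : Fin d → ℝ := w - cV z with hy
  refine ⟨h - Mᵀ.mulVec z, ⟨y, fun i => ?_, ?_⟩, z, by abel⟩
  · have h1 := Int.floor_le (w i + 1/2)
    have h2 := Int.lt_floor_add_one (w i + 1/2)
    simp only [Set.mem_Ico, hy, Pi.sub_apply, cV, hzdef]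
    constructor <;> [linarith; linarith]
  · have hBw : B.mulVec w = cV h := by
      rw [hw, Matrix.mulVec_mulVec, Matrix.mul_nonsing_inv _ hBdet, Matrix.one_mulVec]
    rw [show ((fun i => ((h - Mᵀ.mulVec z) i : ℝ)) = cV (h - Mᵀ.mulVec z)) from rfl]
    have : cV (h - Mᵀ.mulVec z) = B.mulVec y := by
      have : cV (h - Mᵀ.mulVec z) = cV h - B.mulVec (cV z) := by
        funext i
        simp only [cV, Pi.sub_apply, Int.cast_sub, Matrix.mulVec, dotProduct, hB,
          Matrix.map_apply, Matrix.transpose_apply]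
        push_cast
        ring_nf
      rw [this, ← hBw, hy, Matrix.mulVec_sub]
    exact this
end Red

section Index

variable {d : ℕ}

private lemma mulVecLin_int_injective {A : Matrix (Fin d) (Fin d) ℤ} (hA : A.det ≠ 0) :
    Function.Injective A.mulVecLin := by
  intro x y hxy
  have h1 : A.mulVec x = A.mulVec y := hxy
  have h2 : (A.adjugate * A).mulVec x = (A.adjugate * A).mulVec y := by
    rw [← Matrix.mulVec_mulVec, ← Matrix.mulVec_mulVec, h1]
  rw [Matrix.adjugate_mul, Matrix.smul_mulVec, Matrix.smul_mulVec,
    Matrix.one_mulVec, Matrix.one_mulVec] at h2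
  funext i
  have := congrFun h2 i
  simp only [Pi.smul_apply, smul_eq_mul] at this
  exact mul_left_cancel₀ hA this

lemma index_range_mulVecLin (A : Matrix (Fin d) (Fin d) ℤ) (hA : A.det ≠ 0) :
    (LinearMap.range A.mulVecLin).toAddSubgroup.index = A.det.natAbs := by
  classical
  set N := LinearMap.range A.mulVecLin with hN
  have hinj : Function.Injective A.mulVecLin := mulVecLin_int_injective hA
  let e : (Fin d → ℤ) ≃ₗ[ℤ] N := LinearEquiv.ofInjective _ hinj
  have hne : N.toAddSubgroup.index ≠ 0 :=
    Int.submodule_toAddSubgroup_index_ne_zero_iff.mpr ⟨e.symm⟩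
  obtain ⟨n, snf⟩ := N.smithNormalForm (Pi.basisFun ℤ (Fin d))
  have hn : n = Fintype.card (Fin d) := snf.toAddSubgroup_index_ne_zero_iff.mp hne
  have hidx : N.toAddSubgroup.index = ∏ i : Fin n, (snf.a i).natAbs := by
    rw [snf.toAddSubgroup_index_eq_ite, if_pos hn]
    exact Finset.prod_congr rfl fun i _ => by
      rw [Ideal.span_singleton_toAddSubgroup_eq_zmultiples, Int.index_zmultiples]
  have hfb : Function.Bijective snf.f :=
    (Fintype.bijective_iff_injective_and_card snf.f).mpr ⟨snf.f.injective, by simp [hn]⟩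
  let σ : Fin d ≃ Fin n := (Equiv.ofBijective snf.f hfb).symm
  let e2 : (Fin d → ℤ) ≃ₗ[ℤ] N := snf.bM.equiv snf.bN σ
  have hdet1 : LinearMap.det (N.subtype ∘ₗ (e : (Fin d → ℤ) →ₗ[ℤ] N)) = A.det := by
    have heq : N.subtype ∘ₗ (e : (Fin d → ℤ) →ₗ[ℤ] N) = Matrix.toLin' A := by
      ext x j
      simp only [LinearMap.comp_apply, LinearEquiv.coe_coe, Submodule.coe_subtype,
        LinearMap.coe_single, e, LinearEquiv.ofInjective_apply, Matrix.toLin'_apply]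
      rfl
    rw [heq, LinearMap.det_toLin']
  have hdet2 : (LinearMap.det (N.subtype ∘ₗ (e2 : (Fin d → ℤ) →ₗ[ℤ] N))).natAbs =
      ∏ i : Fin n, (snf.a i).natAbs := by
    set g : (Fin d → ℤ) →ₗ[ℤ] (Fin d → ℤ) := N.subtype ∘ₗ (e2 : (Fin d → ℤ) →ₗ[ℤ] N) with hg
    have hga : ∀ j, g (snf.bM j) = snf.a (σ j) • snf.bM j := by
      intro j
      have : e2 (snf.bM j) = snf.bN (σ j) := snf.bM.equiv_apply j snf.bN σ
      have h2 : g (snf.bM j) = (snf.bN (σ j) : Fin d → ℤ) := by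
        simp [hg, this]
      rw [h2, snf.snf (σ j)]
      congr 1
      exact congrArg snf.bM ((Equiv.ofBijective snf.f hfb).apply_symm_apply j)
    have hmat : LinearMap.toMatrix snf.bM snf.bM g = Matrix.diagonal fun j => snf.a (σ j) := by
      ext i j
      rw [LinearMap.toMatrix_apply, hga, _root_.map_smul, Module.Basis.repr_self, Finsupp.smul_single,
        smul_eq_mul, mul_one]
      by_cases h : i = j
      · rw [h, Matrix.diagonal_apply_eq, Finsupp.single_eq_same]
      · rw [Matrix.diagonal_apply_ne _ h, Finsupp.single_eq_of_ne h]
    rw [← LinearMap.det_toMatrix snf.bM g, hmat, Matrix.det_diagonal]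
    rw [show (∏ j : Fin d, snf.a (σ j)).natAbs = ∏ j : Fin d, (snf.a (σ j)).natAbs from
      map_prod Int.natAbsHom _ _]
    exact Equiv.prod_comp σ fun i => (snf.a i).natAbs
  have hassoc := LinearMap.associated_det_comp_equiv N.subtype e e2
  have hfin : A.det.natAbs = (LinearMap.det (N.subtype ∘ₗ (e2 : (Fin d → ℤ) →ₗ[ℤ] N))).natAbs := by
    rw [← hdet1]
    exact Int.natAbs_eq_iff_associated.mpr hassoc
  rw [hidx, ← hdet2, hfin]

end Index

section Card

variable {d : ℕ} {M : Matrix (Fin d) (Fin d) ℤ}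

lemma ncard_genSet (hM : M.det ≠ 0) : (genSet d Mᵀ).ncard = M.det.natAbs := by
  classical
  have hAdet : (Mᵀ).det ≠ 0 := by rwa [Matrix.det_transpose]
  set H := (LinearMap.range (Mᵀ).mulVecLin).toAddSubgroup with hH
  have hmem : ∀ v : Fin d → ℤ, v ∈ H ↔ ∃ z : Fin d → ℤ, Mᵀ.mulVec z = v := by
    intro v
    simp only [hH, Submodule.mem_toAddSubgroup, LinearMap.mem_range, Matrix.mulVecLin_apply]
  have hEquiv : Nonempty ((genSet d Mᵀ : Set (Fin d → ℤ)) ≃ ((Fin d → ℤ) ⧸ H)) := by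
    refine ⟨Equiv.ofBijective (fun g => QuotientAddGroup.mk (g : Fin d → ℤ)) ⟨?_, ?_⟩⟩
    · rintro ⟨g, hg⟩ ⟨g', hg'⟩ hq
      have : -(g : Fin d → ℤ) + g' ∈ H := QuotientAddGroup.eq.mp hq
      obtain ⟨z, hz⟩ := (hmem _).mp this
      have : g' = g + Mᵀ.mulVec z := by rw [hz]; abel
      exact Subtype.ext (genSet_unique hM hg' hg this).symm
    · intro q
      obtain ⟨h, rfl⟩ := QuotientAddGroup.mk_surjective q
      obtain ⟨g, hg, z, hz⟩ := genSet_exists_red hM h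
      refine ⟨⟨g, hg⟩, QuotientAddGroup.eq.mpr ((hmem _).mpr ⟨z, ?_⟩)⟩
      rw [hz]; abel
  have h1 : (genSet d Mᵀ).ncard = Nat.card ((Fin d → ℤ) ⧸ H) := by
    rw [← Nat.card_coe_set_eq]
    exact Nat.card_congr hEquiv.some
  have h2 : Nat.card ((Fin d → ℤ) ⧸ H) = H.index := rfl
  rw [h1, h2, hH, index_range_mulVecLin _ hAdet, Matrix.det_transpose]

lemma genSet_finite (hM : M.det ≠ 0) : (genSet d Mᵀ).Finite := by
  by_contra hinf
  have h0 : (genSet d Mᵀ).ncard = 0 := Set.Infinite.ncard hinf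
  rw [ncard_genSet hM] at h0
  exact Int.natAbs_ne_zero.mpr hM h0

end Card

section Integral

variable {d : ℕ}

lemma cube_measurableSet : MeasurableSet (cube d) :=
  MeasurableSet.univ_pi fun _ => measurableSet_Ico

lemma integral_Ico_exp (n : ℤ) :
    ∫ t in Set.Ico (-Real.pi) Real.pi, Complex.exp (Complex.I * (n : ℂ) * (t : ℂ)) =
      if n = 0 then ((2 * Real.pi : ℝ) : ℂ) else 0 := by
  rcases eq_or_ne n 0 with h | h
  · subst h
    simp only [Int.cast_zero, mul_zero, zero_mul, Complex.exp_zero, if_pos]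
    rw [setIntegral_const, Real.volume_real_Ico_of_le (by linarith [Real.pi_pos])]
    have : Real.pi - -Real.pi = 2 * Real.pi := by ring
    rw [this]
    simp
  · rw [if_neg h, setIntegral_congr_set Ico_ae_eq_Ioc]
    have hle : -Real.pi ≤ Real.pi := by linarith [Real.pi_pos]
    rw [← intervalIntegral.integral_of_le hle]
    have hc : (Complex.I * (n : ℂ)) ≠ 0 :=
      mul_ne_zero Complex.I_ne_zero (by exact_mod_cast h)
    rw [integral_exp_mul_complex hc, div_eq_zero_iff]
    left
    rw [sub_eq_zero, Complex.exp_eq_exp_iff_exists_int]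
    exact ⟨n, by push_cast; ring⟩

lemma integral_cube_exp (k : Fin d → ℤ) :
    ∫ x in cube d, Complex.exp (Complex.I * ((dot d k x : ℝ) : ℂ)) =
      if k = 0 then (((2 * Real.pi) ^ d : ℝ) : ℂ) else 0 := by
  have hfact : ∀ x : Fin d → ℝ, Complex.exp (Complex.I * ((dot d k x : ℝ) : ℂ))
      = ∏ i, Complex.exp (Complex.I * (k i : ℂ) * (x i : ℂ)) := by
    intro x
    rw [← Complex.exp_sum]
    congr 1
    simp only [dot]
    push_cast
    rw [Finset.mul_sum]
    exact Finset.sum_congr rfl fun i _ => by ring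
  simp_rw [hfact]
  rw [← integral_indicator cube_measurableSet]
  have hind : (cube d).indicator (fun x => ∏ i, Complex.exp (Complex.I * (k i : ℂ) * (x i : ℂ)))
      = fun x => ∏ i, (Set.Ico (-Real.pi) Real.pi).indicator
          (fun t => Complex.exp (Complex.I * (k i : ℂ) * (t : ℂ))) (x i) := by
    funext x
    by_cases hx : x ∈ cube d
    · rw [Set.indicator_of_mem hx]
      have hxi : ∀ i, x i ∈ Set.Ico (-Real.pi) Real.pi := fun i => hx i (Set.mem_univ i)
      exact Finset.prod_congr rfl fun i _ =>
        (Set.indicator_of_mem (hxi i) fun t => Complex.exp (Complex.I * (k i : ℂ) * (t : ℂ))).symm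
    · rw [Set.indicator_of_notMem hx]
      have : ∃ i, x i ∉ Set.Ico (-Real.pi) Real.pi := by
        by_contra hcon
        push_neg at hcon
        exact hx fun i _ => hcon i
      obtain ⟨i, hi⟩ := this
      symm
      apply Finset.prod_eq_zero (Finset.mem_univ i)
      rw [Set.indicator_of_notMem hi]
  rw [hind, MeasureTheory.integral_fintype_prod_volume_eq_prod
    (fun i t => (Set.Ico (-Real.pi) Real.pi).indicator
      (fun u => Complex.exp (Complex.I * (k i : ℂ) * (u : ℂ))) t)]
  simp_rw [integral_indicator measurableSet_Ico, integral_Ico_exp]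
  rcases eq_or_ne k 0 with hk | hk
  · subst hk
    simp only [Pi.zero_apply, if_pos rfl, Finset.prod_const, Finset.card_univ, Fintype.card_fin]
    push_cast
    ring
  · rw [if_neg hk]
    have : ∃ i, k i ≠ 0 := by
      by_contra hcon
      push_neg at hcon
      exact hk (funext hcon)
    obtain ⟨i, hi⟩ := this
    exact Finset.prod_eq_zero (Finset.mem_univ i) (if_neg hi)

end Integral

section CharSum

variable {d : ℕ} {M : Matrix (Fin d) (Fin d) ℤ}

/-- The character attached to a lattice point. -/
private def ch (v : Fin d → ℝ) (h : Fin d → ℤ) : ℂ :=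
  Complex.exp (Complex.I * ((2 * Real.pi * dot d h v : ℝ) : ℂ))

private lemma ch_add_mulVec {v : Fin d → ℝ} {w : Fin d → ℤ}
    (hvw : mulVecR d M v = cV w) (h z : Fin d → ℤ) :
    ch v (h + Mᵀ.mulVec z) = ch v h := by
  have hdot : dot d (Mᵀ.mulVec z) v = ((∑ j, z j * w j : ℤ) : ℝ) := by
    rw [dot_mulVec_transpose, hvw]
    push_cast
    rfl
  unfold ch
  rw [dot_add_left, hdot]
  have : Complex.I * ((2 * Real.pi * (dot d h v + ((∑ j, z j * w j : ℤ) : ℝ)) : ℝ) : ℂ)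
      = Complex.I * ((2 * Real.pi * dot d h v : ℝ) : ℂ)
        + ((∑ j, z j * w j : ℤ) : ℂ) * (2 * (Real.pi : ℂ) * Complex.I) := by
    push_cast
    ring
  rw [this, Complex.exp_add, Complex.exp_int_mul_two_pi_mul_I, mul_one]

private noncomputable def redG (hM : M.det ≠ 0) (h : Fin d → ℤ) : Fin d → ℤ :=
  (genSet_exists_red hM h).choose

private lemma redG_mem (hM : M.det ≠ 0) (h : Fin d → ℤ) : redG hM h ∈ genSet d Mᵀ :=
  (genSet_exists_red hM h).choose_spec.1

private lemma redG_spec (hM : M.det ≠ 0) (h : Fin d → ℤ) :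
    ∃ z : Fin d → ℤ, h = redG hM h + Mᵀ.mulVec z :=
  (genSet_exists_red hM h).choose_spec.2

lemma char_sum_zero (hM : M.det ≠ 0) (S : Finset (Fin d → ℤ))
    (hS : ↑S = genSet d Mᵀ) {v : Fin d → ℝ} {w : Fin d → ℤ}
    (hvw : mulVecR d M v = cV w) (hbox : ∀ i, -1 < v i ∧ v i < 1) (hv : v ≠ 0) :
    ∑ h ∈ S, ch v h = 0 := by
  classical
  have hmemS : ∀ {g : Fin d → ℤ}, g ∈ S ↔ g ∈ genSet d Mᵀ := fun {g} => by
    rw [← hS]; exact Iff.symm Finset.mem_coe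
  obtain ⟨i, hvi⟩ : ∃ i, v i ≠ 0 := by
    by_contra hcon
    push_neg at hcon
    exact hv (funext hcon)
  set t : Fin d → ℤ := Pi.single i 1 with ht
  set ε : ℂ := Complex.exp (Complex.I * ((2 * Real.pi * v i : ℝ) : ℂ)) with hε_def
  have hε : ε ≠ 1 := by
    intro h1
    obtain ⟨n, hn⟩ := Complex.exp_eq_one_iff.mp (hε_def ▸ h1)
    have h2 : Complex.I * ((2 * Real.pi * v i : ℝ) : ℂ) = Complex.I * ((n : ℂ) * (2 * Real.pi)) := by
      rw [hn]; ring
    have h3 : ((2 * Real.pi * v i : ℝ) : ℂ) = ((n : ℂ) * (2 * Real.pi)) :=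
      mul_left_cancel₀ Complex.I_ne_zero h2
    have h4 : 2 * Real.pi * v i = (n : ℝ) * (2 * Real.pi) := by exact_mod_cast h3
    have h5 : v i = (n : ℝ) := by
      have hpi : (2 * Real.pi) ≠ 0 := by positivity
      apply mul_left_cancel₀ hpi
      linarith [h4]
    have hb := hbox i
    have : -1 < (n : ℝ) ∧ (n : ℝ) < 1 := by rw [← h5]; exact hb
    have hn1 : -1 < n := by exact_mod_cast this.1
    have hn2 : n < 1 := by exact_mod_cast this.2
    have : n = 0 := by omega
    rw [this] at h5
    exact hvi (by simpa using h5)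
  have hmul : ∀ h : Fin d → ℤ, ch v (h + t) = ch v h * ε := by
    intro h
    unfold ch
    rw [dot_add_left, ht, dot_single, hε_def, ← Complex.exp_add]
    congr 1
    push_cast
    ring
  have hbij : ∑ g ∈ S, ch v (g + t) = ∑ g ∈ S, ch v g := by
    refine Finset.sum_bij' (fun g _ => redG hM (g + t)) (fun g _ => redG hM (g - t))
      ?_ ?_ ?_ ?_ ?_
    · intro g hg
      exact hmemS.mpr (redG_mem hM (g + t))
    · intro g hg
      exact hmemS.mpr (redG_mem hM (g - t))
    · intro g hg
      obtain ⟨z₁, hz₁⟩ := redG_spec hM (g + t)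
      obtain ⟨z₂, hz₂⟩ := redG_spec hM (redG hM (g + t) - t)
      have hsum : g = redG hM (redG hM (g + t) - t) + Mᵀ.mulVec (z₂ + z₁) := by
        rw [Matrix.mulVec_add]
        linear_combination hz₁ + hz₂
      exact (genSet_unique hM (hmemS.mp hg)
        (redG_mem hM (redG hM (g + t) - t)) hsum).symm
    · intro g hg
      obtain ⟨z₁, hz₁⟩ := redG_spec hM (g - t)
      obtain ⟨z₂, hz₂⟩ := redG_spec hM (redG hM (g - t) + t)
      have hsum : g = redG hM (redG hM (g - t) + t) + Mᵀ.mulVec (z₂ + z₁) := by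
        rw [Matrix.mulVec_add]
        linear_combination hz₁ + hz₂
      exact (genSet_unique hM (hmemS.mp hg)
        (redG_mem hM (redG hM (g - t) + t)) hsum).symm
    · intro g hg
      obtain ⟨z₁, hz₁⟩ := redG_spec hM (g + t)
      calc ch v (g + t) = ch v (redG hM (g + t) + Mᵀ.mulVec z₁) := by rw [← hz₁]
        _ = ch v (redG hM (g + t)) := ch_add_mulVec hvw _ _
  have hkey : (∑ h ∈ S, ch v h) * (ε - 1) = 0 := by
    rw [mul_sub, mul_one, Finset.sum_mul]
    simp_rw [← hmul]
    rw [hbij, sub_self]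
  rcases mul_eq_zero.mp hkey with h | h
  · exact h
  · exact absurd (sub_eq_zero.mp h) hε
end CharSum

/-- translates of the normalised Dirichlet kernel are orthonormal. -/
theorem dirichlet_translates_orthonormal
    (d : ℕ) (hd : 0 < d)
    (M : Matrix (Fin d) (Fin d) ℤ) (hM : M.det ≠ 0) :
    OrthonormalTranslates d M
      (fun x => ((Real.sqrt (M.det.natAbs) : ℝ) : ℂ)⁻¹ * dirichlet d M x) := by
  classical
  intro y hy y' hy'
  set m : ℕ := M.det.natAbs with hm
  have hm0 : m ≠ 0 := Int.natAbs_ne_zero.mpr hM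
  set c : ℂ := ((Real.sqrt m : ℝ) : ℂ) with hc
  set F : (Fin d → ℝ) → ℂ := fun x => c⁻¹ * dirichlet d M x with hF
  set S : Finset (Fin d → ℤ) := (genSet_finite hM).toFinset with hSdef
  have hScoe : (↑S : Set (Fin d → ℤ)) = genSet d Mᵀ := (genSet_finite hM).coe_toFinset
  have hcard : S.card = m := by
    rw [hSdef, ← Set.ncard_eq_toFinset_card _ (genSet_finite hM), ncard_genSet hM]
  set P : ℂ := (((2 * Real.pi) ^ d : ℝ) : ℂ) with hP
  have hPne : P ≠ 0 := by
    rw [hP]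
    exact_mod_cast (by positivity : ((2 * Real.pi) ^ d : ℝ) ≠ 0)
  -- expansion of a translate
  have hTr : ∀ (u x : Fin d → ℝ),
      Tr d u F x = c⁻¹ * ∑ h ∈ S, Complex.exp (Complex.I * ((dot d h x : ℝ) : ℂ))
        * Complex.exp (-Complex.I * ((2 * Real.pi * dot d h u : ℝ) : ℂ)) := by
    intro u x
    simp only [Tr, hF]
    congr 1
    rw [show dirichlet d M (x - (2 * Real.pi) • u)
        = ∑ᶠ h ∈ genSet d Mᵀ,
            Complex.exp (Complex.I * ((dot d h (x - (2 * Real.pi) • u) : ℝ) : ℂ)) from rfl,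
      ← hScoe, finsum_mem_coe_finset]
    refine Finset.sum_congr rfl fun h _ => ?_
    rw [← Complex.exp_add]
    congr 1
    rw [dot_sub_right, dot_smul_right]
    push_cast
    ring
  -- pointwise product expansion
  have hpoint : ∀ x, Tr d y F x * (starRingEnd ℂ) (Tr d y' F x)
      = (c⁻¹ * (starRingEnd ℂ) c⁻¹) * ∑ h ∈ S, ∑ h' ∈ S,
          (Complex.exp (-Complex.I * ((2 * Real.pi * dot d h y : ℝ) : ℂ))
            * Complex.exp (Complex.I * ((2 * Real.pi * dot d h' y' : ℝ) : ℂ)))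
          * Complex.exp (Complex.I * ((dot d (h - h') x : ℝ) : ℂ)) := by
    intro x
    rw [hTr y x, hTr y' x, _root_.map_mul, mul_mul_mul_comm, map_sum, Finset.sum_mul_sum]
    congr 1
    refine Finset.sum_congr rfl fun h _ => Finset.sum_congr rfl fun h' _ => ?_
    rw [_root_.map_mul, ← Complex.exp_conj, ← Complex.exp_conj]
    simp only [_root_.map_mul, map_neg, Complex.conj_I, Complex.conj_ofReal]
    simp only [← Complex.exp_add]
    congr 1
    rw [dot_sub_left]
    push_cast
    ring
  -- integrability
  have hIntOn : ∀ (k : Fin d → ℤ) (cst : ℂ),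
      IntegrableOn (fun x => cst * Complex.exp (Complex.I * ((dot d k x : ℝ) : ℂ))) (cube d) := by
    intro k cst
    have hcont : Continuous fun x : Fin d → ℝ =>
        cst * Complex.exp (Complex.I * ((dot d k x : ℝ) : ℂ)) := by
      refine continuous_const.mul (Complex.continuous_exp.comp ?_)
      refine continuous_const.mul (Complex.continuous_ofReal.comp ?_)
      exact continuous_finset_sum _ fun i _ => continuous_const.mul (continuous_apply i)
    have hcomp : IsCompact (Set.univ.pi fun _ : Fin d => Set.Icc (-Real.pi) Real.pi) :=
      isCompact_univ_pi fun _ => isCompact_Icc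
    exact ((hcont.continuousOn).integrableOn_compact hcomp).mono_set
      (fun x hx i _ => ⟨(hx i trivial).1, le_of_lt (hx i trivial).2⟩)
  -- the integral
  have hint : (∫ x in cube d, Tr d y F x * (starRingEnd ℂ) (Tr d y' F x))
      = (c⁻¹ * (starRingEnd ℂ) c⁻¹) * ∑ h ∈ S, ∑ h' ∈ S,
          (Complex.exp (-Complex.I * ((2 * Real.pi * dot d h y : ℝ) : ℂ))
            * Complex.exp (Complex.I * ((2 * Real.pi * dot d h' y' : ℝ) : ℂ)))
          * (if h - h' = 0 then P else 0) := by
    simp only [hpoint]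
    rw [integral_const_mul]
    congr 1
    rw [integral_finset_sum _ (fun h _ => integrable_finset_sum _ (fun h' _ => hIntOn _ _))]
    refine Finset.sum_congr rfl fun h _ => ?_
    rw [integral_finset_sum _ (fun h' _ => hIntOn _ _)]
    refine Finset.sum_congr rfl fun h' _ => ?_
    rw [integral_const_mul, integral_cube_exp, hP]
  -- collapse the double sum
  have hcol : (∑ h ∈ S, ∑ h' ∈ S,
          (Complex.exp (-Complex.I * ((2 * Real.pi * dot d h y : ℝ) : ℂ))
            * Complex.exp (Complex.I * ((2 * Real.pi * dot d h' y' : ℝ) : ℂ)))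
          * (if h - h' = 0 then P else 0))
      = P * ∑ h ∈ S, ch (y' - y) h := by
    rw [Finset.mul_sum]
    refine Finset.sum_congr rfl fun h hh => ?_
    simp_rw [sub_eq_zero, mul_ite, mul_zero]
    rw [Finset.sum_ite_eq S h, if_pos hh, ← Complex.exp_add]
    have : ch (y' - y) h = Complex.exp (-Complex.I * ((2 * Real.pi * dot d h y : ℝ) : ℂ)
        + Complex.I * ((2 * Real.pi * dot d h y' : ℝ) : ℂ)) := by
      simp only [ch]
      congr 1
      rw [dot_sub_right]
      push_cast
      ring
    rw [this]
    ring
  -- the conjugate-inverse coefficient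
  have hcc : c⁻¹ * (starRingEnd ℂ) c⁻¹ = ((m : ℂ))⁻¹ := by
    rw [hc, ← Complex.ofReal_inv, Complex.conj_ofReal, ← Complex.ofReal_mul,
      ← mul_inv, Real.mul_self_sqrt (Nat.cast_nonneg m)]
    push_cast
    rfl
  -- put everything together
  have hTI : torusInner d (Tr d y F) (Tr d y' F) = ((m : ℂ))⁻¹ * ∑ h ∈ S, ch (y' - y) h := by
    rw [torusInner, hint, hcol, hcc, ← hP]
    field_simp
  rw [hTI]
  by_cases hyy : y = y'
  · rw [if_pos hyy, hyy]
    have : ∀ h ∈ S, ch (y' - y') h = 1 := by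
      intro h _
      simp [ch, dot]
    rw [Finset.sum_congr rfl this, Finset.sum_const, hcard, nsmul_eq_mul, mul_one,
      inv_mul_cancel₀ (by exact_mod_cast hm0 : (m : ℂ) ≠ 0)]
  · rw [if_neg hyy]
    obtain ⟨⟨z, hz⟩, hybox⟩ := hy
    obtain ⟨⟨z', hz'⟩, hybox'⟩ := hy'
    have hvw : mulVecR d M (y' - y) = cV (z' - z) := by
      have hsub : mulVecR d M (y' - y)
          = mulVecR d M y' - mulVecR d M y := Matrix.mulVec_sub _ _ _
      rw [hsub, hz', hz]
      funext i
      simp [cV]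
    have hbox : ∀ i, -1 < (y' - y) i ∧ (y' - y) i < 1 := by
      intro i
      have b1 := hybox i
      have b2 := hybox' i
      simp only [Set.mem_Ico] at b1 b2
      constructor <;> (simp only [Pi.sub_apply]; linarith)
    have hvne : y' - y ≠ 0 := sub_ne_zero.mpr (Ne.symm hyy)
    rw [char_sum_zero hM S hScoe hvw hbox hvne, mul_zero]

end ElastFFT
end
end

section
/- Let C⁰ be a positive definite reference stiffness with the usual symmetries. Then for every k ∈ ℝ^d with k ≠ 0 and every u ∈ ℂ^d, the Green operator symbol recovers symmetrized gradients: Γ̂⁰_k : (C⁰ : Dₖu) = Dₖu, where Dₖu = (i/2)(k uᵀ + u kᵀ). -/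
open MeasureTheory Complex Matrix
open scoped BigOperators Classical

noncomputable section

namespace ElastFFT

variable (d : ℕ)

section Aux

lemma frob_adj (d : ℕ) (k : Fin d → ℝ) (A : Matrix (Fin d) (Fin d) ℂ) (u : Fin d → ℂ) :
    frobInner d A (symGrad d k u) = ∑ j, symGradAdj d k A j * (starRingEnd ℂ) (u j) := by
  have conjk : ∀ i, (starRingEnd ℂ) ((k i : ℂ)) = (k i : ℂ) := fun i => Complex.conj_ofReal _
  unfold frobInner symGrad symGradAdj
  have L : ∀ i j, A i j * (starRingEnd ℂ) ((Matrix.of fun i j =>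
      (Complex.I / 2) * ((k i : ℂ) * u j + u i * (k j : ℂ))) i j)
      = A i j * ((-Complex.I/2) * ((k i : ℂ) * (starRingEnd ℂ) (u j)))
        + A i j * ((-Complex.I/2) * ((starRingEnd ℂ) (u i) * (k j : ℂ))) := by
    intro i j
    simp only [Matrix.of_apply, map_add, _root_.map_mul, map_div₀, Complex.conj_I, conjk,
      map_ofNat]
    ring
  calc (∑ i, ∑ j, A i j * (starRingEnd ℂ) ((Matrix.of fun i j =>
        (Complex.I / 2) * ((k i : ℂ) * u j + u i * (k j : ℂ))) i j))
      = (∑ i, ∑ j, A i j * ((-Complex.I/2) * ((k i : ℂ) * (starRingEnd ℂ) (u j))))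
        + (∑ i, ∑ j, A i j * ((-Complex.I/2) * ((starRingEnd ℂ) (u i) * (k j : ℂ)))) := by
        rw [← Finset.sum_add_distrib]
        refine Finset.sum_congr rfl fun i _ => ?_
        rw [← Finset.sum_add_distrib]
        exact Finset.sum_congr rfl fun j _ => L i j
    _ = ∑ j, (∑ i, (-Complex.I / 2) * (k i : ℂ) * (A i j + A j i)) * (starRingEnd ℂ) (u j) := by
        rw [Finset.sum_comm]
        rw [show (∑ i, ∑ j, A i j * ((-Complex.I/2) * ((starRingEnd ℂ) (u i) * (k j : ℂ))))
            = ∑ j, ∑ i, A j i * ((-Complex.I/2) * ((starRingEnd ℂ) (u j) * (k i : ℂ))) from rfl]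
        rw [← Finset.sum_add_distrib]
        refine Finset.sum_congr rfl fun j _ => ?_
        rw [Finset.sum_mul, ← Finset.sum_add_distrib]
        refine Finset.sum_congr rfl fun i _ => ?_
        ring

lemma acoustic_mulVec (d : ℕ) (C0 : Fin d → Fin d → Fin d → Fin d → ℝ)
    (k : Fin d → ℝ) (u : Fin d → ℂ) :
    (acoustic d C0 k).mulVec u = symGradAdj d k (capply d C0 (symGrad d k u)) := by
  have hsg_add : ∀ u v : Fin d → ℂ, symGrad d k (u + v) = symGrad d k u + symGrad d k v := by
    intro u v; ext i j; simp [symGrad]; ring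
  have hsg_smul : ∀ (c : ℂ) (u : Fin d → ℂ), symGrad d k (c • u) = c • symGrad d k u := by
    intro c u; ext i j; simp [symGrad]; ring
  have hc_add : ∀ A B : Matrix (Fin d) (Fin d) ℂ,
      capply d C0 (A + B) = capply d C0 A + capply d C0 B := by
    intro A B; ext i j; simp [capply, mul_add, Finset.sum_add_distrib]
  have hc_smul : ∀ (c : ℂ) (A : Matrix (Fin d) (Fin d) ℂ),
      capply d C0 (c • A) = c • capply d C0 A := by
    intro c A; ext i j
    simp [capply, Finset.mul_sum, Matrix.smul_apply, smul_eq_mul]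
    refine Finset.sum_congr rfl fun a _ => Finset.sum_congr rfl fun b _ => ?_
    ring
  let F : (Fin d → ℂ) →ₗ[ℂ] (Fin d → ℂ) :=
    { toFun := fun v => symGradAdj d k (capply d C0 (symGrad d k v))
      map_add' := by
        intro v w
        rw [hsg_add, hc_add]
        funext j
        simp [symGradAdj, Matrix.add_apply, Finset.sum_add_distrib]
        refine Eq.trans ?_ (Finset.sum_add_distrib)
        refine Finset.sum_congr rfl fun i _ => ?_
        ring
      map_smul' := by
        intro c v
        dsimp only [RingHom.id_apply]
        rw [hsg_smul, hc_smul]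
        funext j
        simp [symGradAdj, Matrix.smul_apply, smul_eq_mul, Finset.mul_sum]
        refine Finset.sum_congr rfl fun i _ => ?_
        ring }
  have h1 : acoustic d C0 k = LinearMap.toMatrix' F := by
    ext i j
    rw [LinearMap.toMatrix'_apply]
    have hone : (fun j' => if j' = j then (1:ℂ) else 0) = Pi.single j 1 := by
      funext j'; simp [Pi.single_apply]
    rfl
  rw [h1, ← Matrix.toLin'_apply, Matrix.toLin'_toMatrix']
  rfl

lemma symGrad_isSymm (d : ℕ) (k : Fin d → ℝ) (u : Fin d → ℂ) : (symGrad d k u).IsSymm := by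
  ext i j
  simp [symGrad, Matrix.transpose_apply]
  ring


end Aux

/-- the Green operator symbol recovers symmetrised gradients. -/
theorem greenSym_recovers_symGrad
    (d : ℕ) (hd : 0 < d)
    (C0 : Fin d → Fin d → Fin d → Fin d → ℝ)
    (hC0symm : TensorSymm d C0) (hC0pos : TensorPosDef d C0)
    (k : Fin d → ℝ) (hk : k ≠ 0) (u : Fin d → ℂ) :
    greenSymR d C0 k (capply d C0 (symGrad d k u)) = symGrad d k u := by
  obtain ⟨c, hc, hpos⟩ := hC0pos
  set A := acoustic d C0 k with hA
  have hdet : IsUnit A.det := by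
    rw [isUnit_iff_ne_zero]
    intro hdet0
    obtain ⟨v, hv0, hv⟩ := Matrix.exists_mulVec_eq_zero_iff.mpr hdet0
    have hfrob : frobInner d (capply d C0 (symGrad d k v)) (symGrad d k v) = 0 := by
      rw [frob_adj, ← acoustic_mulVec, ← hA, hv]
      simp
    have hineq := hpos (symGrad d k v) (symGrad_isSymm d k v)
    rw [hfrob, Complex.zero_re] at hineq
    have hsum0 : ∑ i, ∑ j, Complex.normSq (symGrad d k v i j) = 0 := by
      have hnn : 0 ≤ ∑ i, ∑ j, Complex.normSq (symGrad d k v i j) :=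
        Finset.sum_nonneg fun i _ => Finset.sum_nonneg fun j _ => Complex.normSq_nonneg _
      have h1 : 0 ≤ c * ∑ i, ∑ j, Complex.normSq (symGrad d k v i j) := mul_nonneg hc.le hnn
      have h2 : c * ∑ i, ∑ j, Complex.normSq (symGrad d k v i j) = 0 := le_antisymm hineq h1
      exact (mul_eq_zero.mp h2).resolve_left (ne_of_gt hc)
    have hentry : ∀ i j, symGrad d k v i j = 0 := by
      intro i j
      have h1 : ∀ i ∈ Finset.univ, (0:ℝ) ≤ ∑ j, Complex.normSq (symGrad d k v i j) :=
        fun i _ => Finset.sum_nonneg fun j _ => Complex.normSq_nonneg _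
      have h2 := (Finset.sum_eq_zero_iff_of_nonneg h1).mp hsum0 i (Finset.mem_univ i)
      have h3 := (Finset.sum_eq_zero_iff_of_nonneg
        (fun j _ => Complex.normSq_nonneg _)).mp h2 j (Finset.mem_univ j)
      exact Complex.normSq_eq_zero.mp h3
    obtain ⟨i0, hi0⟩ := Function.ne_iff.mp hk
    have hki0 : ((k i0 : ℂ)) ≠ 0 := by
      simpa using hi0
    have hvi0 : v i0 = 0 := by
      have h := hentry i0 i0
      simp only [symGrad, Matrix.of_apply] at h
      have h2 : (k i0 : ℂ) * v i0 + v i0 * (k i0 : ℂ) = 0 := by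
        have hI : (Complex.I / 2) ≠ 0 := by simp [Complex.I_ne_zero]
        exact (mul_eq_zero.mp h).resolve_left hI
      have h3 : (2 : ℂ) * ((k i0 : ℂ) * v i0) = 0 := by linear_combination h2
      have := mul_eq_zero.mp h3
      rcases this with h | h
      · norm_num at h
      · exact (mul_eq_zero.mp h).resolve_left hki0
    apply hv0
    funext j
    have h := hentry i0 j
    simp only [symGrad, Matrix.of_apply, hvi0, zero_mul, add_zero] at h
    have hI : (Complex.I / 2) ≠ 0 := by simp [Complex.I_ne_zero]
    have h2 := (mul_eq_zero.mp h).resolve_left hI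
    exact (mul_eq_zero.mp h2).resolve_left hki0
  have hinv : A⁻¹ * A = 1 := Matrix.nonsing_inv_mul A hdet
  unfold greenSymR
  rw [← acoustic_mulVec, ← hA, Matrix.mulVec_mulVec, hinv, Matrix.one_mulVec]

end ElastFFT
end
end
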